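/- Let δ ∈ (0,1]. Let W be a standard exponential random variable and let S, S' be independent positive strictly stable random variables with exponent δ having the same distribution, with W, S, S' mutually independent. Then W·(S/S') has the Mittag-Leffler distribution with parameter δ: E[exp(-s·W·S/S')] = 1/(1+s^δ) for all s ≥ 0. In particular, the Mittag-Leffler distribution is a mixed exponential distribution. -/

import Mathlib

open MeasureTheory ProbabilityTheory Filter Set
open scoped Topology ENNReal

/-- FTC helper: `∫_0^∞ δ u^{δ-1} e^{-c u^δ} du = 1/c`. -/
lemma ml_aux_ftc {δ c : ℝ} (hδ0 : 0 < δ) (hc : 0 < c) :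
    IntegrableOn (fun u : ℝ => δ * u ^ (δ - 1) * Real.exp (-(c * u ^ δ))) (Ioi (0:ℝ)) ∧
    ∫ u in Ioi (0:ℝ), δ * u ^ (δ - 1) * Real.exp (-(c * u ^ δ)) = c⁻¹ := by
  set G : ℝ → ℝ := fun u => -Real.exp (-(c * u ^ δ)) / c with hG
  have hderiv : ∀ u ∈ Ioi (0:ℝ), HasDerivAt G (δ * u ^ (δ - 1) * Real.exp (-(c * u ^ δ))) u := by
    intro u hu
    have h1 : HasDerivAt (fun x : ℝ => x ^ δ) (δ * u ^ (δ - 1)) u :=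
      Real.hasDerivAt_rpow_const (Or.inl (ne_of_gt hu))
    have h2 : HasDerivAt (fun x : ℝ => -(c * x ^ δ)) (-(c * (δ * u ^ (δ - 1)))) u :=
      (h1.const_mul c).neg
    have h3 := h2.exp
    have h4 := (h3.neg).div_const c
    refine h4.congr_deriv ?_
    rw [div_eq_iff hc.ne']
    ring
  have hcont : ContinuousWithinAt G (Ici (0:ℝ)) 0 := by
    have : ContinuousAt (fun x : ℝ => x ^ δ) 0 := Real.continuousAt_rpow_const 0 δ (Or.inr (le_of_lt hδ0))
    exact (((this.const_smul c).neg.rexp.neg.div_const c)).continuousWithinAt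
  have hpos : ∀ u ∈ Ioi (0:ℝ), 0 ≤ δ * u ^ (δ - 1) * Real.exp (-(c * u ^ δ)) := by
    intro u hu
    have : (0:ℝ) ≤ u ^ (δ - 1) := Real.rpow_nonneg (le_of_lt hu) _
    positivity
  have htend : Tendsto G atTop (𝓝 0) := by
    have h1 : Tendsto (fun u : ℝ => u ^ δ) atTop atTop := tendsto_rpow_atTop hδ0
    have h2 : Tendsto (fun u : ℝ => -(c * u ^ δ)) atTop atBot :=
      tendsto_neg_atTop_atBot.comp (h1.const_mul_atTop hc)
    have h3 := (Real.tendsto_exp_atBot.comp h2).neg.div_const c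
    simpa using h3
  have hG0 : G 0 = -c⁻¹ := by
    rw [hG]
    simp [Real.zero_rpow (ne_of_gt hδ0)]
    ring
  refine ⟨integrableOn_Ioi_deriv_of_nonneg hcont hderiv hpos htend, ?_⟩
  rw [integral_Ioi_of_hasDerivAt_of_nonneg hcont hderiv hpos htend, hG0]
  ring

/-- `∫_0^∞ e^{-cu} du = 1/c`. -/
lemma ml_exp_int {c : ℝ} (hc : 0 < c) :
    IntegrableOn (fun u : ℝ => Real.exp (-(c * u))) (Ioi (0:ℝ)) ∧
    ∫ u in Ioi (0:ℝ), Real.exp (-(c * u)) = c⁻¹ := by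
  have h := ml_aux_ftc (δ := 1) one_pos hc
  simpa [Real.rpow_one] using h

/-- Laplace transform of the standard exponential distribution. -/
lemma ml_laplace_exp {Ω : Type*} [MeasurableSpace Ω] (P : Measure Ω) [IsProbabilityMeasure P]
    (W : Ω → ℝ) (hWm : Measurable W)
    (hW : ∀ x : ℝ, 0 ≤ x → P {ω | x < W ω} = ENNReal.ofReal (Real.exp (-x)))
    {c : ℝ} (hc : 0 ≤ c) :
    ∫ ω, Real.exp (-(c * W ω)) ∂P = (1 + c)⁻¹ := by
  have hWpos : ∀ᵐ ω ∂P, 0 < W ω := by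
    have h0 : P {ω | 0 < W ω} = 1 := by simpa using hW 0 le_rfl
    have hms : MeasurableSet {ω | 0 < W ω} := hWm measurableSet_Ioi
    rw [ae_iff]
    have heq : {ω | ¬ 0 < W ω} = {ω | 0 < W ω}ᶜ := by ext ω; simp
    rw [heq, prob_compl_eq_zero_iff hms]
    exact h0
  have hmeas : Measurable fun ω => Real.exp (-(c * W ω)) :=
    (measurable_const.mul hWm).neg.exp
  have hint : Integrable (fun ω => Real.exp (-(c * W ω))) P := by
    refine (integrable_const (1:ℝ)).mono' hmeas.aestronglyMeasurable ?_
    filter_upwards [hWpos] with ω hω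
    rw [Real.norm_eq_abs, abs_of_pos (Real.exp_pos _)]
    exact Real.exp_le_one_iff.mpr (by nlinarith)
  rcases eq_or_lt_of_le hc with rfl | hc0
  · simp
  -- layer cake with upper bound 1
  have hbdd : (fun ω => Real.exp (-(c * W ω))) ≤ᵐ[P] fun _ => (1:ℝ) := by
    filter_upwards [hWpos] with ω hω
    exact Real.exp_le_one_iff.mpr (by nlinarith)
  rw [hint.integral_eq_integral_Ioc_meas_le (Eventually.of_forall fun ω => (Real.exp_pos _).le) hbdd]
  -- the measure of the superlevel set
  have hkey : ∀ t ∈ Ioc (0:ℝ) 1,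
      (P {ω | t ≤ Real.exp (-(c * W ω))}).toReal = 1 - t ^ c⁻¹ := by
    intro t ht
    obtain ⟨ht0, ht1⟩ := ht
    have hlt : Real.log t ≤ 0 := Real.log_nonpos (le_of_lt ht0) ht1
    have hy : 0 ≤ -Real.log t / c := div_nonneg (neg_nonneg.mpr hlt) hc0.le
    have hset : {ω | t ≤ Real.exp (-(c * W ω))} = {ω | -Real.log t / c < W ω}ᶜ := by
      ext ω
      simp only [mem_setOf_eq, mem_compl_iff, not_lt]
      rw [← Real.log_le_iff_le_exp ht0, le_div_iff₀ hc0]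
      constructor <;> intro h <;> nlinarith
    rw [hset]
    have hPset : P {ω | -Real.log t / c < W ω} = ENNReal.ofReal (Real.exp (Real.log t / c)) := by
      rw [hW _ hy]
      congr 1
      ring_nf
    have hcompl : P {ω | -Real.log t / c < W ω}ᶜ
        = 1 - ENNReal.ofReal (Real.exp (Real.log t / c)) := by
      have hms2 : MeasurableSet {ω | -Real.log t / c < W ω} := hWm measurableSet_Ioi
      rw [measure_compl hms2 (measure_ne_top _ _), hPset, measure_univ]
    rw [hcompl]
    have hle : ENNReal.ofReal (Real.exp (Real.log t / c)) ≤ 1 := by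
      rw [ENNReal.ofReal_le_one]
      refine Real.exp_le_one_iff.mpr ?_
      exact div_nonpos_of_nonpos_of_nonneg hlt hc0.le
    rw [ENNReal.toReal_sub_of_le hle (by simp), ENNReal.toReal_one,
      ENNReal.toReal_ofReal (Real.exp_pos _).le]
    congr 1
    rw [Real.rpow_def_of_pos ht0, div_eq_mul_inv]
  rw [setIntegral_congr_fun measurableSet_Ioc (f := fun t => P.real {ω | t ≤ Real.exp (-(c * W ω))})
    (g := fun t => 1 - t ^ c⁻¹) (fun t ht => hkey t ht)]
  have hinv0 : (0:ℝ) < c⁻¹ := inv_pos.mpr hc0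
  have hii : IntervalIntegrable (fun t : ℝ => t ^ c⁻¹) MeasureTheory.volume 0 1 :=
    intervalIntegral.intervalIntegrable_rpow' (by linarith)
  have h1 : ∫ t in Ioc (0:ℝ) 1, (1 - t ^ c⁻¹) = ∫ t in (0:ℝ)..1, (1 - t ^ c⁻¹) := by
    rw [intervalIntegral.integral_of_le zero_le_one]
  have hinv : (0:ℝ) < c⁻¹ := inv_pos.mpr hc0
  have hc1 : c⁻¹ + 1 ≠ 0 := by positivity
  rw [h1, intervalIntegral.integral_sub intervalIntegrable_const hii,
    intervalIntegral.integral_const, integral_rpow (Or.inl (by linarith))]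
  rw [Real.one_rpow, Real.zero_rpow (by linarith)]
  field_simp
  simp [smul_eq_mul]

/-- A nonnegative r.v. whose Laplace transform tends to 0 is a.s. positive. -/
lemma ml_pos {Ω : Type*} [MeasurableSpace Ω] (P : Measure Ω) [IsProbabilityMeasure P]
    (δ : ℝ) (hδ0 : 0 < δ)
    (S' : Ω → ℝ) (hS'm : Measurable S') (hS'nn : ∀ᵐ ω ∂P, 0 ≤ S' ω)
    (hS' : ∀ s : ℝ, 0 ≤ s → ∫ ω, Real.exp (-(s * S' ω)) ∂P = Real.exp (-(s ^ δ))) :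
    ∀ᵐ ω ∂P, 0 < S' ω := by
  have hzero : P {ω | S' ω = 0} = 0 := by
    set A := {ω | S' ω = 0} with hA
    have hAm : MeasurableSet A := hS'm (measurableSet_singleton 0)
    have hle : ∀ n : ℕ, (P A).toReal ≤ Real.exp (-((n:ℝ) ^ δ)) := by
      intro n
      have hmeas : Measurable fun ω => Real.exp (-((n:ℝ) * S' ω)) :=
        (measurable_const.mul hS'm).neg.exp
      have hint : Integrable (fun ω => Real.exp (-((n:ℝ) * S' ω))) P := by
        refine (integrable_const (1:ℝ)).mono' hmeas.aestronglyMeasurable ?_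
        filter_upwards [hS'nn] with ω hω
        rw [Real.norm_eq_abs, abs_of_pos (Real.exp_pos _)]
        exact Real.exp_le_one_iff.mpr (neg_nonpos.mpr (mul_nonneg (Nat.cast_nonneg n) hω))
      have h1 : ∫ ω in A, Real.exp (-((n:ℝ) * S' ω)) ∂P = (P A).toReal := by
        rw [setIntegral_congr_fun hAm (g := fun _ => (1:ℝ)) ?_]
        · simp [measureReal_def]
        · intro ω hω
          simp [hA] at hω
          simp [hω]
      calc (P A).toReal = ∫ ω in A, Real.exp (-((n:ℝ) * S' ω)) ∂P := h1.symm
        _ ≤ ∫ ω, Real.exp (-((n:ℝ) * S' ω)) ∂P :=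
            setIntegral_le_integral hint (Eventually.of_forall fun ω => (Real.exp_pos _).le)
        _ = Real.exp (-((n:ℝ) ^ δ)) := hS' _ (Nat.cast_nonneg n)
    have htend : Tendsto (fun n : ℕ => Real.exp (-((n:ℝ) ^ δ))) atTop (𝓝 0) := by
      refine Real.tendsto_exp_atBot.comp ?_
      refine tendsto_neg_atTop_atBot.comp ?_
      exact (tendsto_rpow_atTop hδ0).comp tendsto_natCast_atTop_atTop
    have h0 : (P A).toReal ≤ 0 := ge_of_tendsto' htend hle
    have := ENNReal.toReal_nonneg (a := P A)
    have heq0 : (P A).toReal = 0 := le_antisymm h0 this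
    exact (ENNReal.toReal_eq_zero_iff _).mp heq0 |>.resolve_right (measure_ne_top _ _)
  have hne : ∀ᵐ ω ∂P, S' ω ≠ 0 := by
    rw [ae_iff]; simp only [ne_eq, not_not]; exact hzero
  filter_upwards [hS'nn, hne] with ω h1 h2
  rcases eq_or_lt_of_le h1 with h | h
  · exact absurd h.symm h2
  · exact h

/-- `E[S' e^{-u S'}] = δ u^{δ-1} e^{-u^δ}` for `u > 0`, by differentiating the Laplace transform. -/
lemma ml_deriv {Ω : Type*} [MeasurableSpace Ω] (P : Measure Ω) [IsProbabilityMeasure P]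
    (δ : ℝ) (hδ0 : 0 < δ)
    (S' : Ω → ℝ) (hS'm : Measurable S') (hS'nn : ∀ᵐ ω ∂P, 0 ≤ S' ω)
    (hS' : ∀ s : ℝ, 0 ≤ s → ∫ ω, Real.exp (-(s * S' ω)) ∂P = Real.exp (-(s ^ δ)))
    {u : ℝ} (hu : 0 < u) :
    ∫ ω, S' ω * Real.exp (-(u * S' ω)) ∂P = δ * u ^ (δ - 1) * Real.exp (-(u ^ δ)) := by
  -- the dominated-derivative theorem
  have key := hasDerivAt_integral_of_dominated_loc_of_deriv_le (μ := P)
    (F := fun x ω => Real.exp (-(x * S' ω)))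
    (F' := fun x ω => -(S' ω * Real.exp (-(x * S' ω))))
    (x₀ := u) (bound := fun _ => (u/2)⁻¹) (s := Metric.ball u (u/2)) (Metric.ball_mem_nhds u (by positivity))
    (Eventually.of_forall fun x => ((measurable_const.mul hS'm).neg.exp).aestronglyMeasurable)
    ?_ ((hS'm.mul (measurable_const.mul hS'm).neg.exp).neg).aestronglyMeasurable ?_
    (integrable_const _) ?_
  · obtain ⟨-, hD⟩ := key
    -- the integral function agrees with exp(-(x^δ)) near u
    have hEq : (fun x => ∫ ω, Real.exp (-(x * S' ω)) ∂P) =ᶠ[𝓝 u] fun x => Real.exp (-(x ^ δ)) := by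
      filter_upwards [Ioi_mem_nhds hu] with x hx
      exact hS' x (le_of_lt hx)
    have hD2 : HasDerivAt (fun x => Real.exp (-(x ^ δ)))
        (∫ ω, -(S' ω * Real.exp (-(u * S' ω))) ∂P) u := hD.congr_of_eventuallyEq hEq.symm
    have hD3 : HasDerivAt (fun x => Real.exp (-(x ^ δ)))
        (Real.exp (-(u ^ δ)) * -(δ * u ^ (δ - 1))) u := by
      have h1 : HasDerivAt (fun x : ℝ => x ^ δ) (δ * u ^ (δ - 1)) u :=
        Real.hasDerivAt_rpow_const (Or.inl (ne_of_gt hu))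
      exact h1.neg.exp
    have := hD3.unique hD2
    rw [integral_neg] at this
    have h2 : ∫ ω, S' ω * Real.exp (-(u * S' ω)) ∂P
        = Real.exp (-(u ^ δ)) * (δ * u ^ (δ - 1)) := by linarith
    rw [h2]; ring
  · -- integrability of F u
    refine (integrable_const (1:ℝ)).mono'
      ((measurable_const.mul hS'm).neg.exp).aestronglyMeasurable ?_
    filter_upwards [hS'nn] with ω hω
    rw [Real.norm_eq_abs, abs_of_pos (Real.exp_pos _)]
    exact Real.exp_le_one_iff.mpr (neg_nonpos.mpr (mul_nonneg hu.le hω))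
  · -- the bound
    filter_upwards [hS'nn] with ω hω
    intro x hx
    have hx2 : u/2 ≤ x := by
      rw [Metric.mem_ball, Real.dist_eq, abs_lt] at hx
      linarith
    rw [norm_neg, Real.norm_eq_abs, abs_of_nonneg (by positivity)]
    have h1 : Real.exp (-(x * S' ω)) ≤ Real.exp (-((u/2) * S' ω)) := by
      refine Real.exp_le_exp.mpr ?_
      have : (u/2) * S' ω ≤ x * S' ω := mul_le_mul_of_nonneg_right hx2 hω
      linarith
    have h2 : S' ω * Real.exp (-((u/2) * S' ω)) ≤ (u/2)⁻¹ := by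
      have hc : (0:ℝ) < u/2 := by positivity
      have h3 : (u/2) * S' ω ≤ Real.exp ((u/2) * S' ω) := by
        have := Real.add_one_le_exp ((u/2) * S' ω)
        linarith
      rw [Real.exp_neg]
      rw [mul_inv_le_iff₀ (Real.exp_pos _)]
      calc S' ω = ((u/2) * S' ω) * (u/2)⁻¹ := by field_simp
        _ ≤ Real.exp ((u/2) * S' ω) * (u/2)⁻¹ :=
            mul_le_mul_of_nonneg_right h3 (by positivity)
        _ = (u/2)⁻¹ * Real.exp ((u/2) * S' ω) := by ring
    calc S' ω * Real.exp (-(x * S' ω)) ≤ S' ω * Real.exp (-((u/2) * S' ω)) :=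
          mul_le_mul_of_nonneg_left h1 hω
      _ ≤ (u/2)⁻¹ := h2
  · -- differentiability in x
    refine Eventually.of_forall fun ω => ?_
    intro x hx
    have h1 : HasDerivAt (fun x : ℝ => -(x * S' ω)) (-(S' ω)) x := by
      simpa using (hasDerivAt_neg x).mul_const (S' ω)
    have := h1.exp
    refine this.congr_deriv ?_
    ring

set_option maxHeartbeats 1000000 in
theorem mittagLeffler_is_mixed_exponential
    {Ω : Type*} [MeasurableSpace Ω] (P : Measure Ω) [IsProbabilityMeasure P]
    (δ : ℝ) (hδ0 : 0 < δ) (hδ1 : δ ≤ 1)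
    (W S S' : Ω → ℝ) (hWm : Measurable W) (hSm : Measurable S) (hS'm : Measurable S')
    (hW : ∀ x : ℝ, 0 ≤ x → P {ω | x < W ω} = ENNReal.ofReal (Real.exp (-x)))
    (hSnn : ∀ᵐ ω ∂P, 0 ≤ S ω) (hS'nn : ∀ᵐ ω ∂P, 0 ≤ S' ω)
    (hS : ∀ s : ℝ, 0 ≤ s →
      ∫ ω, Real.exp (-(s * S ω)) ∂P = Real.exp (-(s ^ δ)))
    (hS' : ∀ s : ℝ, 0 ≤ s →
      ∫ ω, Real.exp (-(s * S' ω)) ∂P = Real.exp (-(s ^ δ)))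
    (hindep : iIndepFun ![W, S, S'] P) :
    ∀ s : ℝ, 0 ≤ s →
      ∫ ω, Real.exp (-(s * (W ω * S ω / S' ω))) ∂P = (1 + s ^ δ)⁻¹ := by
  intro s hs
  rcases hs.eq_or_lt with rfl | hs0
  · simp [Real.zero_rpow (ne_of_gt hδ0)]
  -- basic facts
  have hfm : ∀ i, Measurable (![W, S, S'] i) := by
    intro i; fin_cases i <;> [exact hWm; exact hSm; exact hS'm]
  have hpair : IndepFun (fun ω => (S ω, S' ω)) W P :=
    hindep.indepFun_prodMk hfm 1 2 0 (by decide) (by decide)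
  have hSS' : IndepFun S' S P := (hindep.indepFun (show (1:Fin 3) ≠ 2 by decide)).symm
  have hS'pos : ∀ᵐ ω ∂P, 0 < S' ω := ml_pos P δ hδ0 S' hS'm hS'nn hS'
  have hWpos : ∀ᵐ ω ∂P, 0 < W ω := by
    have h0 : P {ω | 0 < W ω} = 1 := by simpa using hW 0 le_rfl
    have hms : MeasurableSet {ω | 0 < W ω} := hWm measurableSet_Ioi
    rw [ae_iff]
    have heq : {ω | ¬ 0 < W ω} = {ω | 0 < W ω}ᶜ := by ext ω; simp
    rw [heq, prob_compl_eq_zero_iff hms]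
    exact h0
  set κ : Measure (ℝ × ℝ) := P.map (fun ω => (S ω, S' ω)) with hκ
  set μW : Measure ℝ := P.map W with hμW
  have : IsProbabilityMeasure κ := Measure.isProbabilityMeasure_map (hSm.prodMk hS'm).aemeasurable
  have : IsProbabilityMeasure μW := Measure.isProbabilityMeasure_map hWm.aemeasurable
  have hκae : ∀ᵐ x ∂κ, 0 ≤ x.1 ∧ 0 < x.2 := by
    rw [hκ, ae_map_iff (hSm.prodMk hS'm).aemeasurable]
    · filter_upwards [hSnn, hS'pos] with ω h1 h2; exact ⟨h1, h2⟩
    · exact (measurableSet_le measurable_const measurable_fst).inter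
        (measurableSet_lt measurable_const measurable_snd)
  have hμWae : ∀ᵐ w ∂μW, 0 < w := by
    rw [hμW, ae_map_iff hWm.aemeasurable measurableSet_Ioi]
    exact hWpos
  have hmapeq : P.map (fun ω => ((S ω, S' ω), W ω)) = κ.prod μW :=
    (indepFun_iff_map_prod_eq_prod_map_map
      (hSm.prodMk hS'm).aemeasurable hWm.aemeasurable).mp hpair
  -- the integrand on the product space
  set f : (ℝ × ℝ) × ℝ → ℝ := fun p => Real.exp (-(s * (p.2 * p.1.1 / p.1.2))) with hf
  have hfmeas : Measurable f := by
    apply Measurable.exp; apply Measurable.neg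
    exact measurable_const.mul ((measurable_snd.mul measurable_fst.fst).div measurable_fst.snd)
  have haeprod : ∀ᵐ p ∂(κ.prod μW), 0 ≤ p.1.1 ∧ 0 < p.1.2 ∧ 0 < p.2 := by
    rw [Measure.ae_prod_iff_ae_ae]
    · filter_upwards [hκae] with x hx
      filter_upwards [hμWae] with w hw
      exact ⟨hx.1, hx.2, hw⟩
    · exact (measurableSet_le measurable_const measurable_fst.fst).inter
        ((measurableSet_lt measurable_const measurable_fst.snd).inter
          (measurableSet_lt measurable_const measurable_snd))
  have hfint : Integrable f (κ.prod μW) := by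
    refine (integrable_const (1:ℝ)).mono' hfmeas.aestronglyMeasurable ?_
    filter_upwards [haeprod] with p hp
    rw [Real.norm_eq_abs, abs_of_pos (Real.exp_pos _)]
    refine Real.exp_le_one_iff.mpr (neg_nonpos.mpr ?_)
    exact mul_nonneg hs (div_nonneg (mul_nonneg hp.2.2.le hp.1) hp.2.1.le)
  -- step 1 : rewrite as an iterated integral
  have step1 : ∫ ω, Real.exp (-(s * (W ω * S ω / S' ω))) ∂P
      = ∫ x, ∫ w, Real.exp (-(s * (w * x.1 / x.2))) ∂μW ∂κ := by
    rw [← integral_prod f hfint, ← hmapeq,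
      integral_map ((hSm.prodMk hS'm).prodMk hWm).aemeasurable
        (hmapeq ▸ hfmeas.aestronglyMeasurable)]
  rw [step1]
  -- step 2 : compute the inner integral (Laplace transform of exponential distribution)
  have step2 : ∫ x, ∫ w, Real.exp (-(s * (w * x.1 / x.2))) ∂μW ∂κ
      = ∫ x : ℝ × ℝ, (∫ u in Ioi (0:ℝ), x.2 * Real.exp (-((x.2 + s * x.1) * u))) ∂κ := by
    refine integral_congr_ae ?_
    filter_upwards [hκae] with x hx
    have hc : 0 ≤ s * x.1 / x.2 := div_nonneg (mul_nonneg hs hx.1) hx.2.le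
    have hcpos : 0 < x.2 + s * x.1 := by nlinarith [mul_nonneg hs hx.1]
    have e : (fun w : ℝ => Real.exp (-(s * (w * x.1 / x.2))))
        = fun w => Real.exp (-((s * x.1 / x.2) * w)) := by
      funext w; congr 1; ring
    have h1 : ∫ w, Real.exp (-(s * (w * x.1 / x.2))) ∂μW
        = ∫ ω, Real.exp (-((s * x.1 / x.2) * W ω)) ∂P := by
      rw [show (∫ w, Real.exp (-(s * (w * x.1 / x.2))) ∂μW)
          = ∫ w, Real.exp (-((s * x.1 / x.2) * w)) ∂μW from by rw [e]]
      rw [hμW]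
      exact integral_map hWm.aemeasurable
        (by fun_prop : Measurable fun w : ℝ =>
          Real.exp (-((s * x.1 / x.2) * w))).aestronglyMeasurable
    rw [h1]
    rw [ml_laplace_exp P W hWm hW hc]
    rw [integral_const_mul]
    rw [(ml_exp_int hcpos).2]
    have hne : x.2 ≠ 0 := ne_of_gt hx.2
    have h2 : 1 + s * x.1 / x.2 = (x.2 + s * x.1) / x.2 := by field_simp
    rw [h2, inv_div, div_eq_mul_inv]
  rw [step2]
  -- step 3 : Fubini
  have hgasm : AEStronglyMeasurable
      (fun q : (ℝ × ℝ) × ℝ => q.1.2 * Real.exp (-((q.1.2 + s * q.1.1) * q.2)))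
      (κ.prod (volume.restrict (Ioi (0:ℝ)))) := by
    apply Continuous.aestronglyMeasurable; fun_prop
  have hswapint : Integrable
      (Function.uncurry fun (x : ℝ × ℝ) (u : ℝ) => x.2 * Real.exp (-((x.2 + s * x.1) * u)))
      (κ.prod (volume.restrict (Ioi (0:ℝ)))) := by
    refine (integrable_prod_iff hgasm).mpr ⟨?_, ?_⟩
    · filter_upwards [hκae] with x hx
      have hcpos : 0 < x.2 + s * x.1 := by nlinarith [mul_nonneg hs hx.1]
      exact ((ml_exp_int hcpos).1).const_mul _
    · refine (integrable_const (1:ℝ)).mono' hgasm.norm.integral_prod_right' ?_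
      filter_upwards [hκae] with x hx
      have hcpos : 0 < x.2 + s * x.1 := by nlinarith [mul_nonneg hs hx.1]
      have hnrm : (fun u => ‖x.2 * Real.exp (-((x.2 + s * x.1) * u))‖)
          = fun u => x.2 * Real.exp (-((x.2 + s * x.1) * u)) := by
        funext u
        rw [Real.norm_eq_abs, abs_of_nonneg (mul_nonneg hx.2.le (Real.exp_pos _).le)]
      rw [hnrm, integral_const_mul, (ml_exp_int hcpos).2,
        Real.norm_eq_abs, abs_of_nonneg (mul_nonneg hx.2.le (by positivity)),
        ← div_eq_mul_inv, div_le_one hcpos]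
      nlinarith [mul_nonneg hs hx.1]
  rw [integral_integral_swap hswapint]
  -- step 4 : compute the κ-integral for each u > 0
  have step4 : ∀ u ∈ Ioi (0:ℝ), ∫ x : ℝ × ℝ, x.2 * Real.exp (-((x.2 + s * x.1) * u)) ∂κ
      = δ * u ^ (δ - 1) * Real.exp (-((1 + s ^ δ) * u ^ δ)) := by
    intro u hu
    have hu0 : (0:ℝ) < u := hu
    have h1 : ∫ x : ℝ × ℝ, x.2 * Real.exp (-((x.2 + s * x.1) * u)) ∂κ
        = ∫ ω, (S' ω * Real.exp (-(u * S' ω))) * Real.exp (-((u * s) * S ω)) ∂P := by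
      rw [hκ, integral_map (hSm.prodMk hS'm).aemeasurable
        (by fun_prop : Measurable fun x : ℝ × ℝ =>
          x.2 * Real.exp (-((x.2 + s * x.1) * u))).aestronglyMeasurable]
      refine integral_congr_ae (Eventually.of_forall fun ω => ?_)
      simp only
      rw [mul_assoc, ← Real.exp_add]
      congr 1; ring
    have hind2 : IndepFun (fun ω => S' ω * Real.exp (-(u * S' ω)))
        (fun ω => Real.exp (-((u * s) * S ω))) P :=
      hSS'.comp (φ := fun b => b * Real.exp (-(u * b)))
        (ψ := fun a => Real.exp (-((u * s) * a))) (by fun_prop) (by fun_prop)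
    have hX : Measurable fun ω => S' ω * Real.exp (-(u * S' ω)) := by fun_prop
    have hY : Measurable fun ω => Real.exp (-((u * s) * S ω)) := by fun_prop
    have h2 := hind2.integral_mul_eq_mul_integral hX.aestronglyMeasurable hY.aestronglyMeasurable
    have h3 : ∫ ω, (S' ω * Real.exp (-(u * S' ω))) * Real.exp (-((u * s) * S ω)) ∂P
        = (∫ ω, S' ω * Real.exp (-(u * S' ω)) ∂P) * ∫ ω, Real.exp (-((u * s) * S ω)) ∂P := h2
    rw [h1, h3, ml_deriv P δ hδ0 S' hS'm hS'nn hS' hu0, hS (u * s) (mul_nonneg hu0.le hs)]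
    have hexp : -(u ^ δ) + -(u ^ δ * s ^ δ) = -((1 + s ^ δ) * u ^ δ) := by ring
    rw [Real.mul_rpow hu0.le hs, mul_assoc, ← Real.exp_add, hexp]
  rw [setIntegral_congr_fun measurableSet_Ioi step4]
  have hc1 : (0:ℝ) < 1 + s ^ δ := by
    have := Real.rpow_nonneg hs δ
    linarith
  exact (ml_aux_ftc hδ0 hc1).2
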